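/- Let (S,·) be an (h,m)-semigroup with a chain of ideals S_0 ⊂ S_1 ⊂ ⋯ ⊂ S_h = S as in the definition, such that S_0 = {0} where 0 is the zero of S. Then for every n ≥ 2, the semigroup (S,·) satisfies the semigroup identity v_{n,m}^{(h)} ≈ (v_{n,m}^{(h)})². -/

import Mathlib

universe u v

/-- `spowM x k = x^(k+1)`, the `(k+1)`-st power in a semigroup. -/
def spowM {S : Type*} [Mul S] (x : S) : ℕ → S
  | 0 => x
  | k + 1 => spowM x k * x

/-- `opow gmul a k = a^(k+1)` for an explicit binary operation. -/
def opow {G : Type*} (gmul : G → G → G) (a : G) : ℕ → G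
  | 0 => a
  | k + 1 => gmul (opow gmul a k) a

/-- The subset `T` is an abelian group of exponent dividing `m` under the semigroup
multiplication. -/
def IsAbGroupExp {S : Type*} [Mul S] (m : ℕ) (T : Set S) : Prop :=
  (∀ a ∈ T, ∀ b ∈ T, a * b ∈ T) ∧ (∀ a ∈ T, ∀ b ∈ T, a * b = b * a) ∧
    ∃ e ∈ T, (∀ a ∈ T, e * a = a ∧ a * e = a) ∧ (∀ a ∈ T, ∃ b ∈ T, a * b = e) ∧
      ∀ a ∈ T, spowM a (m - 1) = e

/-- The Rees quotient `U/T` is a Brandt semigroup over an abelian group of exponent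
dividing `m`: the nonzero classes `U \ T` are in a multiplication-respecting bijection with
`ι × G × ι` for some nonempty `ι` and some abelian group `(G, gmul)` of exponent dividing `m`. -/
def IsBrandtFactor {S : Type u} [Mul S] (m : ℕ) (T U : Set S) : Prop :=
  ∃ (ι : Type u) (G : Type u) (gmul : G → G → G) (ge : G),
    Nonempty ι ∧
    (∀ a b c : G, gmul (gmul a b) c = gmul a (gmul b c)) ∧
    (∀ a b : G, gmul a b = gmul b a) ∧
    (∀ a : G, gmul ge a = a) ∧
    (∀ a : G, ∃ b : G, gmul a b = ge) ∧
    (∀ a : G, opow gmul a (m - 1) = ge) ∧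
    ∃ φ : S → ι × G × ι,
      Set.BijOn φ (U \ T) Set.univ ∧
      ∀ a ∈ U \ T, ∀ b ∈ U \ T,
        ((φ a).2.2 = (φ b).1 →
          a * b ∈ U \ T ∧ φ (a * b) = ((φ a).1, gmul (φ a).2.1 (φ b).2.1, (φ b).2.2)) ∧
        ((φ a).2.2 ≠ (φ b).1 → a * b ∈ T)

/-- `C 0 ⊂ C 1 ⊂ ⋯ ⊂ C h = S` is a principal chain of ideals witnessing that the semigroup
`S` is an `(h,m)`-semigroup: `C 0` is an abelian group of exponent dividing `m` and each
Rees quotient `C (j+1) / C j` is a Brandt semigroup over such a group. -/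
structure IsHMChain {S : Type u} [Semigroup S] (h m : ℕ) (C : ℕ → Set S) : Prop where
  chain : ∀ j < h, C j ⊂ C (j + 1)
  ideal : ∀ j ≤ h, (C j).Nonempty ∧ ∀ a ∈ C j, ∀ s : S, a * s ∈ C j ∧ s * a ∈ C j
  top : C h = Set.univ
  base : IsAbGroupExp m (C 0)
  factor : ∀ j < h, IsBrandtFactor m (C j) (C (j + 1))

/-- Evaluation of a (nonempty) word, given as a list of variables, in a magma with an
explicit binary operation; the empty word evaluates to `none`. -/
def wEval {ι S : Type*} (mul : S → S → S) (ρ : ι → S) : List ι → Option S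
  | [] => none
  | a :: l => some (l.foldl (fun s i => mul s (ρ i)) (ρ a))

/-- The word `u_{n,k,m} = x₁⋯x_{n+k}(xₙ⋯x₁·x_{n+1}⋯x_{n+k})^{2m-1}` (variables 0-indexed). -/
def uWord (n k m : ℕ) : List ℕ :=
  List.range (n + k) ++
    (List.replicate (2 * m - 1) ((List.range n).reverse ++ List.range' n k)).flatten

/-- The words `v_{n,m}^{(h)}` (`h ≥ 1`), over variables indexed by `h`-tuples from `{0,…,2n-1}`:
`v_{n,m}^{(1)} = u_{n,n,m}`, and `v_{n,m}^{(h+1)}` is obtained by substituting, for the `j`-th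
variable of `v_{n,m}^{(1)}`, the copy of `v_{n,m}^{(h)}` whose variables get `j` appended. -/
def vWord (n m : ℕ) : ℕ → List (List ℕ)
  | 0 => []
  | 1 => (uWord n n m).map (fun i => [i])
  | h + 2 => (uWord n n m).flatMap (fun j => (vWord n m (h + 1)).map (fun xs => xs ++ [j]))

open List

section Eval

variable {κ : Type v} {S : Type u} [Semigroup S] (ρ : κ → S)

/-- `evalFrom ρ s l` : fold the word `l` onto initial value `s`. -/
def evalFrom (s : S) (l : List κ) : S := l.foldl (fun t i => t * ρ i) s

lemma wEval_cons (a : κ) (l : List κ) :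
    wEval (· * ·) ρ (a :: l) = some (evalFrom ρ (ρ a) l) := rfl

lemma evalFrom_append (s : S) (l₁ l₂ : List κ) :
    evalFrom ρ s (l₁ ++ l₂) = evalFrom ρ (evalFrom ρ s l₁) l₂ :=
  List.foldl_append ..

lemma mul_evalFrom (l : List κ) : ∀ s t : S,
    s * evalFrom ρ t l = evalFrom ρ (s * t) l := by
  induction l with
  | nil => intro s t; rfl
  | cons a l ih =>
      intro s t
      show s * evalFrom ρ (t * ρ a) l = evalFrom ρ (s * t * ρ a) l
      rw [ih, mul_assoc]

lemma wEval_append {l₁ l₂ : List κ} {v₁ v₂ : S}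
    (h₁ : wEval (· * ·) ρ l₁ = some v₁) (h₂ : wEval (· * ·) ρ l₂ = some v₂) :
    wEval (· * ·) ρ (l₁ ++ l₂) = some (v₁ * v₂) := by
  cases l₁ with
  | nil => simp [wEval] at h₁
  | cons a t₁ =>
    cases l₂ with
    | nil => simp [wEval] at h₂
    | cons b t₂ =>
      rw [wEval_cons] at h₁ h₂
      have e₁ := Option.some.inj h₁
      have e₂ := Option.some.inj h₂
      show wEval (· * ·) ρ (a :: (t₁ ++ b :: t₂)) = _
      rw [wEval_cons, evalFrom_append, e₁]
      show some (evalFrom ρ (v₁ * ρ b) t₂) = _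
      rw [← mul_evalFrom, e₂]

lemma wEval_map {α : Type*} (f : α → κ) (l : List α) :
    wEval (· * ·) ρ (l.map f) = wEval (· * ·) (fun a => ρ (f a)) l := by
  cases l with
  | nil => rfl
  | cons a t =>
    show some _ = some _
    rw [List.foldl_map]

lemma wEval_ne_nil {l : List κ} (h : l ≠ []) : ∃ v, wEval (· * ·) ρ l = some v := by
  cases l with
  | nil => exact absurd rfl h
  | cons a t => exact ⟨_, rfl⟩

lemma wEval_flatMap {α : Type*} (σ : α → List κ) (vσ : α → S)
    (hσ : ∀ a, wEval (· * ·) ρ (σ a) = some (vσ a)) :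
    ∀ L : List α, wEval (· * ·) ρ (L.flatMap σ) = wEval (· * ·) vσ L := by
  intro L
  induction L with
  | nil => simp [wEval]
  | cons a L ih =>
    rw [List.flatMap_cons]
    cases L with
    | nil =>
      simp only [List.flatMap_nil, List.append_nil]
      rw [hσ a]; rfl
    | cons b L' =>
      have hne : (b :: L').flatMap σ ≠ [] := by
        have h1 : σ b ≠ [] := by
          intro h
          have := hσ b
          rw [h] at this
          simp [wEval] at this
        simp only [List.flatMap_cons]
        intro hcon
        rcases List.append_eq_nil_iff.mp hcon with ⟨h2, _⟩
        exact h1 h2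
      obtain ⟨v, hv⟩ := wEval_ne_nil ρ hne
      rw [wEval_append ρ (hσ a) hv]
      rw [hv] at ih
      obtain ⟨v', hv'⟩ := wEval_ne_nil vσ (l := b :: L') (by simp)
      rw [hv'] at ih
      have : wEval (· * ·) vσ (a :: b :: L') = some (vσ a * v') :=
        wEval_append vσ (l₁ := [a]) rfl hv'
      rw [this, Option.some.inj ih]

end Eval

section Words

open List

/-- The block of `uWord n n m`. -/
def uBlock (n : ℕ) : List ℕ := (List.range n).reverse ++ List.range' n n

lemma uBlock_perm (n : ℕ) : uBlock n ~ List.range (n + n) := by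
  rw [uBlock, List.range_add, List.range'_eq_map_range]
  exact (List.reverse_perm _).append_right _

lemma uWord_eq (n m : ℕ) :
    uWord n n m = List.range (n + n) ++ (List.replicate (2 * m - 1) (uBlock n)).flatten := rfl

lemma uWord_ne_nil {n : ℕ} (hn : 1 ≤ n) (m : ℕ) : uWord n n m ≠ [] := by
  rw [uWord_eq]
  intro h
  rcases List.append_eq_nil_iff.mp h with ⟨h1, _⟩
  rw [List.range_eq_nil] at h1
  omega

lemma uWord_countP {m : ℕ} (hm : 1 ≤ m) (n : ℕ) (p : ℕ → Bool) :
    (uWord n n m).countP p = 2 * m * (List.range (n + n)).countP p := by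
  obtain ⟨m', rfl⟩ : ∃ m', m = m' + 1 := ⟨m - 1, by omega⟩
  rw [uWord_eq, List.countP_append, List.countP_flatten, List.map_replicate]
  rw [List.sum_replicate, smul_eq_mul, (uBlock_perm n).countP_eq]
  have h21 : 2 * (m' + 1) - 1 = 2 * m' + 1 := by omega
  rw [h21]
  ring

lemma uWord_map_prod {G : Type*} [CommMonoid G] {m : ℕ} (hm : 1 ≤ m) (n : ℕ) (f : ℕ → G) :
    ((uWord n n m).map f).prod = (((List.range (n + n)).map f).prod) ^ (2 * m) := by
  obtain ⟨m', rfl⟩ : ∃ m', m = m' + 1 := ⟨m - 1, by omega⟩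
  rw [uWord_eq, List.map_append, List.prod_append, List.map_flatten, List.map_replicate,
    List.prod_flatten, List.map_replicate, List.prod_replicate]
  rw [((uBlock_perm n).map f).prod_eq]
  have h21 : 2 * (m' + 1) - 1 = 2 * m' + 1 := by omega
  rw [h21, ← pow_succ']
  congr 1

lemma vWord_one (n m : ℕ) : vWord n m 1 = (uWord n n m).map (fun i => [i]) := rfl

lemma vWord_top (n m k : ℕ) (hk : 1 ≤ k) :
    vWord n m (k + 1) = (uWord n n m).flatMap (fun j => (vWord n m k).map (fun xs => xs ++ [j])) := by
  obtain ⟨k', rfl⟩ : ∃ k', k = k' + 1 := ⟨k - 1, by omega⟩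
  rfl

lemma vWord_bot (n m : ℕ) : ∀ k, 1 ≤ k →
    vWord n m (k + 1) = (vWord n m k).flatMap (fun w => (uWord n n m).map (fun i => i :: w)) := by
  intro k
  induction k with
  | zero => omega
  | succ k ih =>
    intro _
    by_cases hk : 1 ≤ k
    · rw [vWord_top n m (k+1) (by omega)]
      conv_lhs => rw [ih hk]
      conv_rhs => rw [vWord_top n m k hk]
      rw [List.flatMap_assoc]
      congr 1
      funext j
      rw [List.map_flatMap, List.flatMap_map]
      congr 1
      funext w
      rw [List.map_map]
      rfl
    · have hk0 : k = 0 := by omega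
      subst hk0
      show vWord n m 2 = _
      rw [show vWord n m 2 = (uWord n n m).flatMap
          (fun j => (vWord n m 1).map (fun xs => xs ++ [j])) from rfl,
        vWord_one, List.flatMap_map]
      congr 1
      funext j
      rw [List.map_map]
      rfl

lemma vWord_ne_nil (n m : ℕ) (hn : 1 ≤ n) : ∀ k, 1 ≤ k → vWord n m k ≠ [] := by
  intro k
  induction k with
  | zero => omega
  | succ k ih =>
    intro _
    by_cases hk : 1 ≤ k
    · rw [vWord_top n m k hk]
      obtain ⟨a, t, ht⟩ : ∃ a t, uWord n n m = a :: t := by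
        cases h : uWord n n m with
        | nil => exact absurd h (uWord_ne_nil hn m)
        | cons a t => exact ⟨a, t, rfl⟩
      rw [ht, List.flatMap_cons]
      intro hcon
      rcases List.append_eq_nil_iff.mp hcon with ⟨h1, _⟩
      rw [List.map_eq_nil_iff] at h1
      exact ih hk h1
    · have hk0 : k = 0 := by omega
      subst hk0
      rw [vWord_one]
      intro hcon
      rw [List.map_eq_nil_iff] at hcon
      exact uWord_ne_nil hn m hcon

end Words
section Core

open List Classical

variable {ι : Type u} {G : Type u} [CommGroup G]

/-- One step of running a decorated partial map. -/
def runStep (st : Option (ι × G)) (f : ι → Option (ι × G)) : Option (ι × G) :=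
  st.bind fun q => (f q.1).map fun q' => (q'.1, q.2 * q'.2)

/-- Run a list of decorated partial maps on a state. -/
def runO (fs : List (ι → Option (ι × G))) (st : Option (ι × G)) : Option (ι × G) :=
  fs.foldl runStep st

lemma runO_nil (st : Option (ι × G)) : runO ([] : List (ι → Option (ι × G))) st = st := rfl

lemma runO_cons (f : ι → Option (ι × G)) (fs : List (ι → Option (ι × G))) (st) :
    runO (f :: fs) st = runO fs (runStep st f) := rfl

lemma runO_none (fs : List (ι → Option (ι × G))) : runO fs none = none := by
  induction fs with
  | nil => rfl
  | cons f fs ih => rw [runO_cons]; exact ih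

/-- The key counting lemma: running a word whose letters are all decorated partial
identities or decorated rank-one maps. -/
lemma runO_count (ks : ℕ → Bool) (A B : ℕ → ι) (gg : ℕ → G) (F : ℕ → ι → Option (ι × G))
    (hpid : ∀ j, ks j = false → ∀ r r' g, F j r = some (r', g) → r' = r ∧ g = 1)
    (hsing : ∀ j, ks j = true → ∀ r, F j r = if r = A j then some (B j, gg j) else none) :
    ∀ (w : List ℕ) (t : ι) (g : G) (t' : ι) (g' : G),
      runO (w.map F) (some (t, g)) = some (t', g') →
      (∀ x : ι,
        ((w.countP (fun j => ks j && decide (A j = x)) : ℤ)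
          - (w.countP (fun j => ks j && decide (B j = x)) : ℤ))
          = (if t = x then (1:ℤ) else 0) - (if t' = x then (1:ℤ) else 0))
      ∧ g' = g * (w.map (fun j => if ks j then gg j else 1)).prod := by
  intro w
  induction w with
  | nil =>
    intro t g t' g' hrun
    rw [List.map_nil, runO_nil] at hrun
    obtain ⟨rfl, rfl⟩ : t = t' ∧ g = g' := by
      have := Option.some.inj hrun
      exact ⟨congrArg Prod.fst this, congrArg Prod.snd this⟩
    constructor
    · intro x; simp
    · simp
  | cons j w ih =>
    intro t g t' g' hrun
    rw [List.map_cons, runO_cons] at hrun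
    cases hFj : F j t with
    | none =>
      rw [show runStep (some (t, g)) (F j) = none by
        rw [runStep]; simp [hFj], runO_none] at hrun
      exact absurd hrun (by simp)
    | some q =>
      obtain ⟨t₁, h₁⟩ := q
      rw [show runStep (some (t, g)) (F j) = some (t₁, g * h₁) by
        rw [runStep]; simp [hFj]] at hrun
      obtain ⟨hcount, hprod⟩ := ih t₁ (g * h₁) t' g' hrun
      cases hks : ks j with
      | false =>
        obtain ⟨rfl, rfl⟩ := hpid j hks t t₁ h₁ hFj
        constructor
        · intro x
          rw [List.countP_cons, List.countP_cons]
          simp only [hks, Bool.false_and, if_neg (by simp : ¬(false = true))]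
          push_cast
          exact hcount x
        · rw [List.map_cons, List.prod_cons, if_neg (by simp [hks])]
          rw [hprod, mul_one, one_mul]
      | true =>
        have hF : F j t = if t = A j then some (B j, gg j) else none := hsing j hks t
        rw [hFj] at hF
        by_cases hA : t = A j
        case neg =>
          rw [if_neg hA] at hF
          exact absurd hF (by simp)
        case pos =>
          rw [if_pos hA] at hF
          have hB : t₁ = B j := congrArg Prod.fst (Option.some.inj hF)
          have hg : h₁ = gg j := congrArg Prod.snd (Option.some.inj hF)
          subst hA
          subst hB
          constructor
          · intro x
            have hcx := hcount x
            rw [List.countP_cons, List.countP_cons]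
            simp only [hks, Bool.true_and, decide_eq_true_eq]
            by_cases h1 : A j = x <;> by_cases h2 : B j = x <;> by_cases h3 : t' = x <;>
              simp only [h1, h2, h3, if_true, if_false, if_pos, if_neg, not_false_iff] <;>
              simp [h1, h2, h3] at hcx ⊢ <;> push_cast <;> omega
          · rw [List.map_cons, List.prod_cons, if_pos hks, hprod, hg, mul_assoc]

end Core
section Psi

open List

variable {S : Type u} [Semigroup S] {T U : Set S} {ι : Type u} {G : Type u} [CommGroup G]

/-- The Brandt multiplication rule for the factor `U/T`, with group structure on `G`. -/
def BrandtRule (φ : S → ι × G × ι) (T U : Set S) : Prop :=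
  ∀ a ∈ U \ T, ∀ b ∈ U \ T,
    ((φ a).2.2 = (φ b).1 →
      a * b ∈ U \ T ∧ φ (a * b) = ((φ a).1, (φ a).2.1 * (φ b).2.1, (φ b).2.2)) ∧
    ((φ a).2.2 ≠ (φ b).1 → a * b ∈ T)

-- Right action of `S` on the Brandt factor, as decorated partial maps.
open Classical in
noncomputable def psi (φ : S → ι × G × ι) (E : ι → S) (T U : Set S) (s : S) (r : ι) :
    Option (ι × G) :=
  if E r * s ∈ U \ T then some ((φ (E r * s)).2.2, (φ (E r * s)).2.1) else none

lemma mem_T_of_not {T U : Set S} {x : S} (hU : x ∈ U) (hx : x ∉ U \ T) :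
    x ∈ T := by
  by_contra h
  exact hx ⟨hU, h⟩

variable {φ : S → ι × G × ι} {E : ι → S}
variable (hT : ∀ a ∈ T, ∀ s : S, a * s ∈ T ∧ s * a ∈ T)
variable (hU : ∀ a ∈ U, ∀ s : S, a * s ∈ U ∧ s * a ∈ U)
variable (hinj : Set.InjOn φ (U \ T))
variable (hrule : BrandtRule φ T U)
variable (hE : ∀ r : ι, E r ∈ U \ T ∧ φ (E r) = (r, 1, r))

section lemmas
include hinj hrule hE

lemma right_unit : ∀ a ∈ U \ T, a * E (φ a).2.2 = a := by
  intro a ha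
  set r := (φ a).2.2 with hr
  have h1 := (hrule a ha (E r) (hE r).1).1 (by rw [(hE r).2])
  refine hinj h1.1 ha ?_
  rw [h1.2, (hE r).2]
  show ((φ a).1, (φ a).2.1 * 1, r) = φ a
  rw [mul_one, hr]

lemma left_unit : ∀ a ∈ U \ T, E (φ a).1 * a = a := by
  intro a ha
  set l := (φ a).1 with hl
  have h1 := (hrule (E l) (hE l).1 a ha).1 (by rw [(hE l).2])
  refine hinj h1.1 ha ?_
  rw [h1.2, (hE l).2]
  show (l, 1 * (φ a).2.1, (φ a).2.2) = φ a
  rw [one_mul, hl]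

lemma E_idem (r : ι) : E r * E r = E r := by
  have h1 := (hrule (E r) (hE r).1 (E r) (hE r).1).1 (by rw [(hE r).2])
  refine hinj h1.1 (hE r).1 ?_
  rw [h1.2, (hE r).2, mul_one]

lemma psi_fst {s : S} {r : ι} (h : E r * s ∈ U \ T) : (φ (E r * s)).1 = r := by
  have hc : E r * (E r * s) = E r * s := by
    rw [← mul_assoc, E_idem hinj hrule hE]
  by_contra hne
  have := (hrule (E r) (hE r).1 (E r * s) h).2 (by rw [(hE r).2]; exact fun hx => hne hx.symm)
  rw [hc] at this
  exact h.2 this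

lemma snd_unit {s : S} {l : ι} (h : s * E l ∈ U \ T) : (φ (s * E l)).2.2 = l := by
  have hc : (s * E l) * E l = s * E l := by
    rw [mul_assoc, E_idem hinj hrule hE]
  by_contra hne
  have := (hrule (s * E l) h (E l) (hE l).1).2 (by rw [(hE l).2]; exact hne)
  rw [hc] at this
  exact h.2 this

include hT hU

lemma psi_mul (s t : S) (r : ι) :
    psi φ E T U (s * t) r = runStep (psi φ E T U s r) (psi φ E T U t) := by
  by_cases h₁ : E r * s ∈ U \ T
  · set c := E r * s with hc
    have hpsis : psi φ E T U s r = some ((φ c).2.2, (φ c).2.1) := by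
      rw [psi, if_pos h₁]
    set r₁ := (φ c).2.2 with hr₁
    by_cases h₂ : E r₁ * t ∈ U \ T
    · set d := E r₁ * t with hd
      have hd1 : (φ d).1 = r₁ := psi_fst hinj hrule hE h₂
      have hcd : c * t = c * d := by
        conv_lhs => rw [show c = c * E r₁ from (right_unit hinj hrule hE c h₁).symm]
        rw [mul_assoc]
      have hm := (hrule c h₁ d h₂).1 (by rw [hd1])
      have hrs : E r * (s * t) = c * d := by rw [← mul_assoc, ← hc, hcd]
      have : psi φ E T U (s * t) r = some ((φ (c * d)).2.2, (φ (c * d)).2.1) := by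
        rw [psi, hrs, if_pos hm.1]
      rw [this, hm.2, hpsis]
      show some ((φ d).2.2, (φ c).2.1 * (φ d).2.1) = _
      rw [runStep]
      show _ = ((psi φ E T U t r₁).map fun q' => (q'.1, (φ c).2.1 * q'.2))
      rw [psi, if_pos h₂, Option.map_some]
    · have hdT : E r₁ * t ∈ T := mem_T_of_not (hU (E r₁) (hE r₁).1.1 t).1 h₂
      have hct : c * t ∈ T := by
        have : c * t = c * (E r₁ * t) := by
          conv_lhs => rw [show c = c * E r₁ from (right_unit hinj hrule hE c h₁).symm]
          rw [mul_assoc]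
        rw [this]
        exact (hT _ hdT c).2
      have hst : E r * (s * t) ∈ T := by rw [← mul_assoc, ← hc]; exact hct
      have : psi φ E T U (s * t) r = none := by
        rw [psi, if_neg (fun hx => hx.2 hst)]
      rw [this, hpsis, runStep]
      show none = ((psi φ E T U t r₁).map fun q' => (q'.1, (φ c).2.1 * q'.2))
      rw [psi, if_neg h₂, Option.map_none]
  · have hsT : E r * s ∈ T := mem_T_of_not (hU (E r) (hE r).1.1 s).1 h₁
    have hst : E r * (s * t) ∈ T := by
      rw [← mul_assoc]
      exact (hT _ hsT t).1
    have h0 : psi φ E T U (s * t) r = none := by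
      rw [psi, if_neg (fun hx => hx.2 hst)]
    have h0' : psi φ E T U s r = none := by
      rw [psi, if_neg h₁]
    rw [h0, h0', runStep]
    rfl

lemma psi_T {b : S} (hb : b ∈ T) (r : ι) : psi φ E T U b r = none := by
  rw [psi, if_neg]
  intro hx
  exact hx.2 ((hT b hb (E r)).2)

open Classical in
lemma psi_single {b : S} (hb : b ∈ U \ T) (r : ι) :
    psi φ E T U b r = if r = (φ b).1 then some ((φ b).2.2, (φ b).2.1) else none := by
  by_cases h : r = (φ b).1
  · subst h
    rw [if_pos rfl, psi, left_unit hinj hrule hE b hb, if_pos hb]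
  · rw [if_neg h, psi, if_neg]
    intro hx
    have := (hrule (E r) (hE r).1 b hb).2 (by rw [(hE r).2]; exact fun hc => h hc)
    exact hx.2 this

lemma psi_inj {s : S} {r r' l : ι} {g g' : G}
    (h1 : psi φ E T U s r = some (l, g)) (h2 : psi φ E T U s r' = some (l, g')) :
    r = r' ∧ g = g' := by
  have key : ∀ r₀ g₀, psi φ E T U s r₀ = some (l, g₀) →
      s * E l ∈ U \ T ∧ (φ (s * E l)).1 = r₀ ∧ (φ (s * E l)).2.1 = g₀ := by
    intro r₀ g₀ h
    have hcmem : E r₀ * s ∈ U \ T := by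
      by_contra hx
      rw [psi, if_neg hx] at h
      exact absurd h (by simp)
    rw [psi, if_pos hcmem] at h
    set c := E r₀ * s with hc
    have hl : (φ c).2.2 = l := congrArg Prod.fst (Option.some.inj h)
    have hg : (φ c).2.1 = g₀ := congrArg Prod.snd (Option.some.inj h)
    have hc1 : (φ c).1 = r₀ := psi_fst hinj hrule hE hcmem
    set d := s * E l with hd
    have hcd : c * E l = c := by
      rw [show l = (φ c).2.2 from hl.symm]
      exact right_unit hinj hrule hE c hcmem
    have hcd2 : E r₀ * d = c := by rw [hd, ← mul_assoc, ← hc, hcd]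
    have hdU : d ∈ U := (hU (E l) (hE l).1.1 s).2
    have hdmem : d ∈ U \ T := by
      constructor
      · exact hdU
      · intro hdT
        have : E r₀ * d ∈ T := (hT d hdT (E r₀)).2
        rw [hcd2] at this
        exact hcmem.2 this
    have hd22 : (φ d).2.2 = l := snd_unit hinj hrule hE hdmem
    have hd1 : (φ d).1 = r₀ := by
      by_contra hne
      have := (hrule (E r₀) (hE r₀).1 d hdmem).2 (by rw [(hE r₀).2]; exact fun hx => hne hx.symm)
      rw [hcd2] at this
      exact hcmem.2 this
    have hmm := (hrule (E r₀) (hE r₀).1 d hdmem).1 (by rw [(hE r₀).2, hd1])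
    have : φ c = (r₀, 1 * (φ d).2.1, (φ d).2.2) := by
      rw [← hcd2, hmm.2, (hE r₀).2]
    have hgd : (φ d).2.1 = g₀ := by
      rw [this] at hg
      rw [← hg]
      show (φ d).2.1 = 1 * (φ d).2.1
      rw [one_mul]
    exact ⟨hdmem, hd1, hgd⟩
  obtain ⟨hm1, ha1, hb1⟩ := key r g h1
  obtain ⟨hm2, ha2, hb2⟩ := key r' g' h2
  exact ⟨ha1.symm.trans ha2, hb1.symm.trans hb2⟩

lemma psi_idem {b : S} (hb : b * b = b) :
    ∀ r r' g, psi φ E T U b r = some (r', g) → r' = r ∧ g = 1 := by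
  intro r r' g h
  have hsq : psi φ E T U b r = runStep (psi φ E T U b r) (psi φ E T U b) := by
    conv_lhs => rw [← hb]
    exact psi_mul hT hU hinj hrule hE b b r
  rw [h, runStep] at hsq
  have hsq : some (r', g) = (psi φ E T U b r').map fun q' => (q'.1, g * q'.2) := hsq
  cases h2 : psi φ E T U b r' with
  | none => rw [h2, Option.map_none] at hsq; exact absurd hsq (by simp)
  | some q =>
    obtain ⟨q₁, q₂⟩ := q
    rw [h2, Option.map_some] at hsq
    have hq1 : r' = q₁ := congrArg Prod.fst (Option.some.inj hsq)
    have hq2 : g = g * q₂ := congrArg Prod.snd (Option.some.inj hsq)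
    have hq2' : q₂ = 1 := mul_left_cancel (a := g) (by rw [mul_one, ← hq2])
    subst hq2'
    have h2' : psi φ E T U b r' = some (r', 1) := by rw [h2, ← hq1]
    have hfin := psi_inj hT hU hinj hrule hE h h2'
    exact ⟨hfin.1.symm, hfin.2⟩

lemma psi_self {y : S} (hy : y ∈ U \ T) :
    psi φ E T U y (φ y).1 = some ((φ y).2.2, (φ y).2.1) := by
  rw [psi, left_unit hinj hrule hE y hy, if_pos hy]

lemma psi_fold {κ : Type v} (b : κ → S) :
    ∀ (l : List κ) (s₀ : S) (r : ι),
      psi φ E T U (evalFrom b s₀ l) r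
        = runO (l.map (fun j => psi φ E T U (b j))) (psi φ E T U s₀ r) := by
  intro l
  induction l with
  | nil => intro s₀ r; rfl
  | cons i l ih =>
    intro s₀ r
    show psi φ E T U (evalFrom b (s₀ * b i) l) r = _
    rw [ih (s₀ * b i) r, List.map_cons, runO_cons,
      psi_mul hT hU hinj hrule hE s₀ (b i) r]

lemma psi_eval {κ : Type v} (b : κ → S) {l : List κ} {v : S}
    (hv : wEval (· * ·) b l = some v) (r : ι) :
    psi φ E T U v r = runO (l.map (fun j => psi φ E T U (b j))) (some (r, (1 : G))) := by
  cases l with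
  | nil => exact absurd hv (by simp [wEval])
  | cons a t =>
    rw [wEval_cons] at hv
    have hv' : v = evalFrom b (b a) t := (Option.some.inj hv).symm
    rw [hv', psi_fold hT hU hinj hrule hE b t (b a) r, List.map_cons, runO_cons]
    congr 1
    rw [runStep]
    show psi φ E T U (b a) r = (psi φ E T U (b a) r).map fun q' => (q'.1, 1 * q'.2)
    cases psi φ E T U (b a) r with
    | none => rfl
    | some q => rw [Option.map_some, one_mul]

end lemmas

end Psi
section Key

open List

lemma key_lemma {S : Type u} [Semigroup S] {m n : ℕ} (hm : 1 ≤ m) (hn : 1 ≤ n)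
    {T U : Set S}
    (hT : ∀ a ∈ T, ∀ s : S, a * s ∈ T ∧ s * a ∈ T)
    (hU : ∀ a ∈ U, ∀ s : S, a * s ∈ U ∧ s * a ∈ U)
    (hBF : IsBrandtFactor m T U)
    (b : ℕ → S) (hb : ∀ j, b j * b j = b j ∨ b j ∈ U)
    {y : S} (hy : wEval (· * ·) b (uWord n n m) = some y)
    (hyU : y ∈ U \ T) : y * y = y := by
  classical
  obtain ⟨ι, G, gmul, ge, hι, hassoc, hcomm, hid, hinv, hexp, φ, hbij, hrule0⟩ := hBF
  letI : CommGroup G :=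
    { mul := gmul
      mul_assoc := hassoc
      one := ge
      one_mul := hid
      mul_one := fun a => (hcomm a ge).trans (hid a)
      inv := fun a => Classical.choose (hinv a)
      inv_mul_cancel := fun a => (hcomm _ a).trans (Classical.choose_spec (hinv a))
      mul_comm := hcomm }
  have hexp_pow : ∀ a : G, a ^ m = 1 := by
    have opow_pow : ∀ (a : G) (k : ℕ), opow gmul a k = a ^ (k + 1) := by
      intro a k
      induction k with
      | zero => rw [opow, pow_one]
      | succ k ih =>
        rw [opow, ih]
        exact (pow_succ a (k + 1)).symm
    intro a
    have hm1 : m = (m - 1) + 1 := by omega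
    rw [hm1, ← opow_pow, hexp]
    rfl
  have hrule : BrandtRule φ T U := hrule0
  have hinj : Set.InjOn φ (U \ T) := hbij.injOn
  have hEex : ∀ r : ι, ∃ a, a ∈ U \ T ∧ φ a = (r, 1, r) := by
    intro r
    obtain ⟨a, ha, hfa⟩ := hbij.surjOn (Set.mem_univ ((r, (1 : G), r)))
    exact ⟨a, ha, hfa⟩
  obtain ⟨E, hE⟩ : ∃ E : ι → S, ∀ r : ι, E r ∈ U \ T ∧ φ (E r) = (r, 1, r) :=
    ⟨fun r => Classical.choose (hEex r), fun r => Classical.choose_spec (hEex r)⟩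
  have hpid : ∀ j, decide (b j ∈ U \ T) = false →
      ∀ r r' g, psi φ E T U (b j) r = some (r', g) → r' = r ∧ g = 1 := by
    intro j hks r r' g hF
    have hnot : b j ∉ U \ T := of_decide_eq_false hks
    rcases hb j with hidem | hUj
    · exact psi_idem hT hU hinj hrule hE hidem r r' g hF
    · have hTj : b j ∈ T := mem_T_of_not hUj hnot
      rw [psi_T hT hU hinj hrule hE hTj r] at hF
      exact absurd hF (by simp)
  have hsing : ∀ j, decide (b j ∈ U \ T) = true → ∀ r,
      psi φ E T U (b j) r
        = if r = (φ (b j)).1 then some ((φ (b j)).2.2, (φ (b j)).2.1) else none := by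
    intro j hks r
    have hmem : b j ∈ U \ T := of_decide_eq_true hks
    exact psi_single hT hU hinj hrule hE hmem r
  -- run the word
  have hrun := psi_eval hT hU hinj hrule hE b hy ((φ y).1)
  rw [psi_self hT hU hinj hrule hE hyU] at hrun
  have hrun' : runO ((uWord n n m).map (fun j => psi φ E T U (b j))) (some ((φ y).1, (1 : G)))
      = some ((φ y).2.2, (φ y).2.1) := hrun.symm
  obtain ⟨hcount, hprod⟩ :=
    runO_count (fun j => decide (b j ∈ U \ T)) (fun j => (φ (b j)).1)
      (fun j => (φ (b j)).2.2) (fun j => (φ (b j)).2.1) (fun j => psi φ E T U (b j))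
      hpid hsing (uWord n n m) ((φ y).1) 1 ((φ y).2.2) ((φ y).2.1) hrun'
  -- conclude (φ y).2.2 = (φ y).1
  have h22 : (φ y).2.2 = (φ y).1 := by
    by_contra hne
    have hcx := hcount ((φ y).1)
    rw [if_pos rfl, if_neg hne] at hcx
    rw [uWord_countP hm, uWord_countP hm] at hcx
    set cA' := (List.range (n + n)).countP
      (fun j => decide (b j ∈ U \ T) && decide ((φ (b j)).1 = (φ y).1)) with hcA
    set cB' := (List.range (n + n)).countP
      (fun j => decide (b j ∈ U \ T) && decide ((φ (b j)).2.2 = (φ y).1)) with hcB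
    have hdvd : (2 * (m : ℤ)) ∣ 1 := by
      refine ⟨(cA' : ℤ) - (cB' : ℤ), ?_⟩
      push_cast at hcx
      linarith
    have := Int.le_of_dvd one_pos hdvd
    omega
  -- conclude (φ y).2.1 = 1
  have h21 : (φ y).2.1 = 1 := by
    rw [hprod, one_mul, uWord_map_prod hm]
    rw [show 2 * m = m * 2 by ring, pow_mul, hexp_pow, one_pow]
  -- finish
  have hmm := (hrule y hyU y hyU).1 (by rw [h22])
  refine hinj hmm.1 hyU ?_
  rw [hmm.2, h21, h22, one_mul]
  have : φ y = ((φ y).1, (φ y).2.1, (φ y).2.2) := rfl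
  rw [this, h21, h22]

end Key
section Main

open List

lemma main_lemma {S : Type u} [Semigroup S] {n m : ℕ} (hm : 1 ≤ m) (hn : 1 ≤ n) :
    ∀ k, 1 ≤ k → ∀ C : ℕ → Set S,
      (∀ j, j ≤ k → ∀ a ∈ C j, ∀ s : S, a * s ∈ C j ∧ s * a ∈ C j) →
      C k = Set.univ →
      (∀ j, j < k → IsBrandtFactor m (C j) (C (j + 1))) →
      ∀ (ρ : List ℕ → S) (y : S),
        wEval (· * ·) ρ (vWord n m k) = some y → y * y = y ∨ y ∈ C 0 := by
  intro k
  induction k with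
  | zero => omega
  | succ k ih =>
    intro _ C hideal htop hfac ρ y hy
    by_cases hk : 1 ≤ k
    case neg =>
      have hk0 : k = 0 := by omega
      subst hk0
      rw [vWord_one, wEval_map] at hy
      by_cases hy0 : y ∈ C 0
      · exact Or.inr hy0
      · left
        have hyU : y ∈ C 1 \ C 0 := ⟨by rw [htop]; trivial, hy0⟩
        exact key_lemma hm hn (fun a ha s => hideal 0 (by omega) a ha s)
          (fun a ha s => hideal 1 (by omega) a ha s) (hfac 0 (by omega))
          (fun i => ρ [i]) (fun j => Or.inr (by rw [htop]; trivial)) hy hyU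
    case pos =>
      have hvals : ∀ w : List ℕ,
          ∃ v, wEval (· * ·) ρ ((uWord n n m).map (fun i => i :: w)) = some v := by
        intro w
        apply wEval_ne_nil
        simp only [ne_eq, List.map_eq_nil_iff]
        exact uWord_ne_nil hn m
      choose ρ' hρ' using hvals
      have hyv : wEval (· * ·) ρ' (vWord n m k) = some y := by
        rw [vWord_bot n m k hk, wEval_flatMap ρ _ ρ' hρ' (vWord n m k)] at hy
        exact hy
      have ihy := ih hk (fun j => C (j + 1)) (fun j hj => hideal (j + 1) (by omega))
        htop (fun j hj => hfac (j + 1) (by omega)) ρ' y hyv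
      rcases ihy with h | hy1
      · exact Or.inl h
      · by_cases hy0 : y ∈ C 0
        · exact Or.inr hy0
        · left
          have hbvals : ∀ j : ℕ,
              ∃ v, wEval (· * ·) ρ ((vWord n m k).map (fun xs => xs ++ [j])) = some v := by
            intro j
            apply wEval_ne_nil
            simp only [ne_eq, List.map_eq_nil_iff]
            exact vWord_ne_nil n m hn k hk
          choose bfun hbfun using hbvals
          have hyu : wEval (· * ·) bfun (uWord n n m) = some y := by
            rw [vWord_top n m k hk, wEval_flatMap ρ _ bfun hbfun (uWord n n m)] at hy
            exact hy
          have hb : ∀ j, bfun j * bfun j = bfun j ∨ bfun j ∈ C 1 := by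
            intro j
            have hj := hbfun j
            rw [wEval_map] at hj
            exact ih hk (fun j => C (j + 1)) (fun j hj => hideal (j + 1) (by omega)) htop
              (fun j hj => hfac (j + 1) (by omega)) _ _ hj
          exact key_lemma hm hn (fun a ha s => hideal 0 (by omega) a ha s)
            (fun a ha s => hideal 1 (by omega) a ha s) (hfac 0 (by omega))
            bfun hb hyu ⟨hy1, hy0⟩

end Main

/-- Let `S` be an `(h,m)`-semigroup with chain of ideals `C` such that
`C 0 = {z}` with `z` the zero of `S`. Then for every `n ≥ 2`, `S` satisfies
`v_{n,m}^{(h)} ≈ (v_{n,m}^{(h)})²`. -/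
theorem hm_semigroup_with_zero_satisfies_vh_identity {S : Type u} [Semigroup S] (h m : ℕ)
    (hh : 1 ≤ h) (hm : 1 ≤ m) (C : ℕ → Set S) (hchain : IsHMChain h m C)
    (z : S) (hz : C 0 = {z}) (hzero : ∀ s : S, z * s = z ∧ s * z = z) :
    ∀ n, 2 ≤ n → ∀ ρ : List ℕ → S,
      wEval (· * ·) ρ (vWord n m h) = wEval (· * ·) ρ (vWord n m h ++ vWord n m h) := by
  intro n hn ρ
  have hn1 : 1 ≤ n := by omega
  obtain ⟨y, hy⟩ := wEval_ne_nil ρ (vWord_ne_nil n m hn1 h hh)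
  have hmain := main_lemma hm hn1 h hh C
    (fun j hj => (hchain.ideal j hj).2) hchain.top hchain.factor ρ y hy
  have hyy : y * y = y := by
    rcases hmain with h' | h0
    · exact h'
    · rw [hz, Set.mem_singleton_iff] at h0
      subst h0
      exact (hzero y).1
  rw [hy, wEval_append ρ hy hy, hyy]
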